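/- Let H be a pseudoexpander. Then Σ_{S ∈ SAT(H)} (1/2)^(|V(H) \ Fix(S)|) = 1; that is, assigning to each S ∈ SAT(H) the weight (1/2)^(|V(H) \ Fix(S)|) defines a probability distribution on SAT(H). -/

import Mathlib

open scoped Classical

namespace NBPPaper

/-! ### Literals and assignments.
A literal is a pair `(x, b)` of a variable and a polarity (`true` = positive literal).
A set of literals is a `Finset (Var × Bool)`. -/

/-- A set of literals is consistent: no variable occurs both positively and negatively. -/
def Consistent {Var : Type} (S : Finset (Var × Bool)) : Prop :=
  ∀ x : Var, ¬((x, true) ∈ S ∧ (x, false) ∈ S)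

/-- `S` is a set of literals over the variable set `W`. -/
def LitsOver {Var : Type} (W : Finset Var) (S : Finset (Var × Bool)) : Prop :=
  Consistent S ∧ ∀ l ∈ S, l.1 ∈ W

/-- `S` is an assignment of exactly the variables of `W`:
it contains exactly one literal of each variable of `W` and nothing else. -/
def AssignsExactly {Var : Type} (W : Finset Var) (S : Finset (Var × Bool)) : Prop :=
  (∀ l ∈ S, l.1 ∈ W) ∧ ∀ x ∈ W, ∃! b : Bool, (x, b) ∈ S

/-- Satisfaction of a CNF, given as a set of clauses (each clause a set of literals):
every clause contains a literal of `S`. -/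
def SatCNF {V : Type} (φ : Set (Finset (V × Bool))) (S : Finset (V × Bool)) : Prop :=
  ∀ C ∈ φ, ∃ l ∈ C, l ∈ S

/-! ### Nondeterministic branching programs -/

/-- An edge of a nondeterministic branching program over variable type `Var`
with vertex set `Fin n`.  `lab = none` means the edge is unlabelled; the field
`id` allows parallel edges (multigraph). -/
structure NBPEdge (Var : Type) (n : ℕ) where
  src : Fin n
  dst : Fin n
  lab : Option (Var × Bool)
  id : ℕ
deriving DecidableEq

/-- A nondeterministic branching program: a finite DAG (the vertices `Fin n` are
listed in a topological order, i.e. every edge increases the index) with a single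
source (the only vertex with no incoming edge) and a single sink (the only vertex
with no outgoing edge). -/
structure NBP (Var : Type) where
  n : ℕ
  edges : Finset (NBPEdge Var n)
  source : Fin n
  sink : Fin n
  acyc : ∀ e ∈ edges, e.src < e.dst
  source_no_in : ∀ e ∈ edges, e.dst ≠ source
  sink_no_out : ∀ e ∈ edges, e.src ≠ sink
  only_source : ∀ v : Fin n, v ≠ source → ∃ e ∈ edges, e.dst = v
  only_sink : ∀ v : Fin n, v ≠ sink → ∃ e ∈ edges, e.src = v

variable {Var : Type}

/-- The set of literals labelling the edges of a path (a list of edges). -/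
def pathLits [DecidableEq Var] {n : ℕ} (p : List (NBPEdge Var n)) : Finset (Var × Bool) :=
  (p.filterMap NBPEdge.lab).toFinset

/-- The set of variables occurring (as edge labels) on a path. -/
def pathVars [DecidableEq Var] {n : ℕ} (p : List (NBPEdge Var n)) : Finset Var :=
  ((p.filterMap NBPEdge.lab).map Prod.fst).toFinset

/-- The set of vertices visited by a path. -/
def pathVertices {n : ℕ} (p : List (NBPEdge Var n)) : Finset (Fin n) :=
  (p.map NBPEdge.src).toFinset ∪ (p.map NBPEdge.dst).toFinset

/-- The number of occurrences of the variable `x` as an edge label on the path `p`. -/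
def occCount [DecidableEq Var] {n : ℕ} (x : Var) (p : List (NBPEdge Var n)) : ℕ :=
  (p.filterMap NBPEdge.lab).countP (fun l => decide (l.1 = x))

namespace NBP

/-- `p` is a directed path of `Z` from vertex `u` to vertex `v`. -/
def IsPathFrom (Z : NBP Var) (u v : Fin Z.n) (p : List (NBPEdge Var Z.n)) : Prop :=
  p ≠ [] ∧ (∀ e ∈ p, e ∈ Z.edges) ∧ List.Chain' (fun e f => e.dst = f.src) p ∧
    p.head?.map NBPEdge.src = some u ∧ p.getLast?.map NBPEdge.dst = some v

/-- `p` is a source-sink path of `Z`. -/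
def IsSourceSink (Z : NBP Var) (p : List (NBPEdge Var Z.n)) : Prop :=
  Z.IsPathFrom Z.source Z.sink p

/-- A computational path: a source-sink path carrying no two opposite literals. -/
def IsCompPath [DecidableEq Var] (Z : NBP Var) (p : List (NBPEdge Var Z.n)) : Prop :=
  Z.IsSourceSink p ∧ Consistent (pathLits p)

/-- The set `Vars(Z)` of variables whose literals occur on edges of `Z`. -/
def vars [DecidableEq Var] (Z : NBP Var) : Finset Var :=
  Z.edges.biUnion (fun e => (e.lab.map Prod.fst).toFinset)

/-- `Z` is a (syntactic) read-`d`-times NBP. -/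
def ReadTimes [DecidableEq Var] (Z : NBP Var) (d : ℕ) : Prop :=
  ∀ p, Z.IsSourceSink p → ∀ x : Var, occCount x p ≤ d

/-- `Z` is a uniform read-`d`-times NBP: every variable of `Z` occurs exactly `d`
times on every source-sink path. -/
def UniformReadTimes [DecidableEq Var] (Z : NBP Var) (d : ℕ) : Prop :=
  Z.ReadTimes d ∧ ∀ p, Z.IsSourceSink p → ∀ x ∈ Z.vars, occCount x p = d

/-- `Z` computes the Boolean function with variable set `W` whose satisfying
(total) assignments are described by the predicate `F`. -/
def Computes [DecidableEq Var] (Z : NBP Var) (W : Finset Var)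
    (F : Finset (Var × Bool) → Prop) : Prop :=
  Z.vars = W ∧ ∀ S, AssignsExactly W S → (F S ↔ ∃ p, Z.IsCompPath p ∧ pathLits p ⊆ S)

end NBP

/-- `parts` is the partition of the path `p` generated by the vertex set `X`:
`p` is cut into `|X| + 1` consecutive nonempty subpaths whose cut points are
exactly the vertices of `X`. -/
def GeneratesPartition {n : ℕ} (X : Finset (Fin n)) (p : List (NBPEdge Var n))
    (parts : List (List (NBPEdge Var n))) : Prop :=
  p = parts.flatten ∧ parts.length = X.card + 1 ∧ (∀ q ∈ parts, q ≠ []) ∧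
    (parts.dropLast.filterMap (fun q => q.getLast?.map NBPEdge.dst)).toFinset = X

/-- Variables of `Y₁` occur only on parts with even (0-based) index, i.e. odd-numbered
subpaths, and variables of `Y₂` only on parts with odd (0-based) index. -/
def OddEvenSplit [DecidableEq Var] {n : ℕ} (parts : List (List (NBPEdge Var n)))
    (Y₁ Y₂ : Finset Var) : Prop :=
  ∀ k : ℕ, ∀ x ∈ pathVars (parts.getD k []),
    (x ∈ Y₁ → k % 2 = 0) ∧ (x ∈ Y₂ → k % 2 = 1)

/-- The set `X` of vertices of `Z` (containing neither source nor sink) separates the two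
disjoint subsets `Y₁, Y₂` of `Vars(Z)`. -/
def NBP.Separates [DecidableEq Var] (Z : NBP Var) (X : Finset (Fin Z.n))
    (Y₁ Y₂ : Finset Var) : Prop :=
  Disjoint Y₁ Y₂ ∧ Y₁ ⊆ Z.vars ∧ Y₂ ⊆ Z.vars ∧ Z.source ∉ X ∧ Z.sink ∉ X ∧
  ∃ p parts, Z.IsCompPath p ∧ GeneratesPartition X p parts ∧
    (OddEvenSplit parts Y₁ Y₂ ∨ OddEvenSplit parts Y₂ Y₁)

/-! ### Rooted trees -/

/-- A finite rooted tree on (a subset of) the vertex type `V`, given by a parent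
function together with a depth function certifying acyclicity. -/
structure RootedTree (V : Type) [DecidableEq V] where
  verts : Finset V
  root : V
  parent : V → V
  depth : V → ℕ
  root_mem : root ∈ verts
  parent_mem : ∀ v ∈ verts, v ≠ root → parent v ∈ verts
  depth_root : depth root = 0
  depth_parent : ∀ v ∈ verts, v ≠ root → depth v = depth (parent v) + 1

namespace RootedTree

variable {V : Type} [DecidableEq V]

/-- The children of a vertex. -/
def children (T : RootedTree V) (u : V) : Finset V :=
  T.verts.filter (fun v => v ≠ T.root ∧ T.parent v = u)

/-- The leaves of the tree: vertices with no children. -/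
def leaves (T : RootedTree V) : Finset V :=
  T.verts.filter (fun v => T.children v = ∅)

/-- The vertex set of the path from the root to `v` (i.e. `v` and all its ancestors). -/
def pathVerts (T : RootedTree V) (v : V) : Finset V :=
  (Finset.range (T.depth v + 1)).image (fun k => T.parent^[k] v)

/-- The height of the tree: the largest number of vertices on a root-leaf path. -/
def height (T : RootedTree V) : ℕ :=
  (T.verts.sup T.depth) + 1

/-- Every vertex has at most two children. -/
def IsBinary (T : RootedTree V) : Prop :=
  ∀ u ∈ T.verts, (T.children u).card ≤ 2

/-- The tree is extended: none of its leaves has a sibling. -/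
def IsExtended (T : RootedTree V) : Prop :=
  ∀ v ∈ T.verts, v ≠ T.root → T.children v = ∅ → T.children (T.parent v) = {v}

/-- The edge set of the tree (as unordered pairs). -/
def edgeSet (T : RootedTree V) : Finset (Sym2 V) :=
  (T.verts.filter (fun v => v ≠ T.root)).image (fun v => s(v, T.parent v))

end RootedTree

/-! ### Binary-tree-based graphs and pseudoexpanders -/

/-- A binary-tree-based (BTB) graph on the vertex type `V`: an edge-disjoint union of
`m` extended binary rooted trees such that every leaf of one of the trees is a leaf of
exactly two of the trees, any two trees have at most one vertex in common (that vertex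
being a leaf of both), and the roots are pairwise distinct. -/
structure BTB (V : Type) [DecidableEq V] [Fintype V] where
  m : ℕ
  tree : Fin m → RootedTree V
  binary : ∀ i, (tree i).IsBinary
  extended : ∀ i, (tree i).IsExtended
  cover : ∀ v : V, ∃ i, v ∈ (tree i).verts
  edge_disjoint : ∀ i j, i ≠ j → Disjoint ((tree i).edgeSet) ((tree j).edgeSet)
  leaf_two : ∀ i, ∀ v ∈ (tree i).leaves,
    (Finset.univ.filter (fun j => v ∈ (tree j).leaves)).card = 2
  common_le_one : ∀ i j, i ≠ j → ∀ u v,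
    u ∈ (tree i).verts → u ∈ (tree j).verts →
    v ∈ (tree i).verts → v ∈ (tree j).verts → u = v
  common_leaf : ∀ i j, i ≠ j → ∀ v, v ∈ (tree i).verts → v ∈ (tree j).verts →
    v ∈ (tree i).leaves ∧ v ∈ (tree j).leaves
  roots_inj : Function.Injective (fun i => (tree i).root)

namespace BTB

variable {V : Type} [DecidableEq V] [Fintype V]

/-- `ℓ` is the common leaf of the (adjacent) trees `T_i` and `T_j`. -/
def IsCommonLeaf (H : BTB V) (i j : Fin H.m) (ℓ : V) : Prop :=
  i ≠ j ∧ ℓ ∈ (H.tree i).leaves ∧ ℓ ∈ (H.tree j).leaves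

/-- The trees `T_i` and `T_j` are adjacent (share a common leaf); equivalently,
`{t_i, t_j}` is a pseudoedge of `H`. -/
def Adjacent (H : BTB V) (i j : Fin H.m) : Prop :=
  ∃ ℓ, H.IsCommonLeaf i j ℓ

/-- The pseudodegree of the root `t_i`: the number of pseudoedges containing it. -/
noncomputable def pseudodegree (H : BTB V) (i : Fin H.m) : ℕ :=
  (Finset.univ.filter (fun j => H.Adjacent i j)).card

/-- The set of root vertices of `H`. -/
def rootSet (H : BTB V) : Finset V :=
  Finset.univ.image (fun i => (H.tree i).root)

/-- A pseudomatching: a set of pseudoedges (recorded as ordered pairs of root indices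
with `i < j`) no two of which share an end. -/
def IsPseudomatching (H : BTB V) (M : Finset (Fin H.m × Fin H.m)) : Prop :=
  (∀ e ∈ M, e.1 < e.2 ∧ H.Adjacent e.1 e.2) ∧
  ∀ e ∈ M, ∀ f ∈ M, e ≠ f → e.1 ≠ f.1 ∧ e.1 ≠ f.2 ∧ e.2 ≠ f.1 ∧ e.2 ≠ f.2

/-- A pseudomatching between the disjoint sets `U` and `W` of roots (given by their
indices): every pseudoedge of `M` has one end in `U` and the other in `W`. -/
def IsPseudomatchingBetween (H : BTB V) (M : Finset (Fin H.m × Fin H.m))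
    (U W : Finset (Fin H.m)) : Prop :=
  H.IsPseudomatching M ∧ ∀ e ∈ M, (e.1 ∈ U ∧ e.2 ∈ W) ∨ (e.1 ∈ W ∧ e.2 ∈ U)

/-- The set `⋃M` of root vertices matched by the pseudomatching `M`. -/
def matchingRoots (H : BTB V) (M : Finset (Fin H.m × Fin H.m)) : Finset V :=
  M.biUnion (fun e => {(H.tree e.1).root, (H.tree e.2).root})

/-- The vertex set `V(P_{i,j})` of the path connecting the roots `t_i` and `t_j`
through their common leaf `ℓ`. -/
def clauseVerts (H : BTB V) (i j : Fin H.m) (ℓ : V) : Finset V :=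
  (H.tree i).pathVerts ℓ ∪ (H.tree j).pathVerts ℓ

/-- `S` satisfies the monotone CNF `φ_H`. -/
def SatisfiesPhi (H : BTB V) (S : Finset (V × Bool)) : Prop :=
  ∀ i j ℓ, H.IsCommonLeaf i j ℓ → ∃ v ∈ H.clauseVerts i j ℓ, (v, true) ∈ S

/-- `S` falsifies no clause of `φ_H`. -/
def FalsifiesNoClause (H : BTB V) (S : Finset (V × Bool)) : Prop :=
  ∀ i j ℓ, H.IsCommonLeaf i j ℓ → ¬(∀ v ∈ H.clauseVerts i j ℓ, (v, false) ∈ S)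

/-- `H` is a pseudoexpander. -/
def IsPseudoexpander (H : BTB V) : Prop :=
  (∀ i, ((H.tree i).height : ℝ) ≤ Real.logb 2 H.m / 4.9 + 3) ∧
  ∀ U W : Finset (Fin H.m), Disjoint U W →
    (H.m : ℝ) ^ (0.999 : ℝ) ≤ U.card → (H.m : ℝ) ^ (0.999 : ℝ) ≤ W.card →
    ∃ M, H.IsPseudomatchingBetween M U W ∧ (H.m : ℝ) ^ (0.999 : ℝ) / 3 ≤ M.card

/-! #### The probability space on the satisfying assignments of `φ_H` -/

/-- The set `SAT(H)` of satisfying assignments of `φ_H` (total assignments of the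
variables `V(H)` satisfying every clause). -/
noncomputable def SATH (H : BTB V) : Finset (Finset (V × Bool)) :=
  Finset.univ.filter (fun S => AssignsExactly Finset.univ S ∧ H.SatisfiesPhi S)

/-- `Fix(S)`: the set of leaf variables `ℓ_{i,j}` occurring positively in `S` such that
all the other variables of the clause `C_{i,j}` occur negatively in `S`. -/
def Fix (H : BTB V) (S : Finset (V × Bool)) : Set V :=
  {ℓ | ∃ i j, H.IsCommonLeaf i j ℓ ∧ (ℓ, true) ∈ S ∧
      ∀ v ∈ H.clauseVerts i j ℓ, v ≠ ℓ → (v, false) ∈ S}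

/-- The probability weight of `S`: `(1/2) ^ |V(H) \ Fix(S)|`. -/
noncomputable def weight (H : BTB V) (S : Finset (V × Bool)) : ℝ :=
  (1 / 2 : ℝ) ^ (Fintype.card V - (H.Fix S).ncard)

/-- The probability of the event `E` in the probability space on `SAT(H)`. -/
noncomputable def Pr (H : BTB V) (E : Finset (V × Bool) → Prop) : ℝ :=
  ∑ S ∈ H.SATH.filter E, H.weight S

/-- `|S \ Fix(S)|`: the number of literals of `S` that are not fixed. -/
noncomputable def nonFixedCount (H : BTB V) (S : Finset (V × Bool)) : ℕ :=
  (S.filter (fun l => ¬(l.2 = true ∧ l.1 ∈ H.Fix S))).card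

/-- `v` and `w` are siblings (in one of the trees of `H`). -/
def Sibling (H : BTB V) (v w : V) : Prop :=
  ∃ k, v ∈ (H.tree k).verts ∧ w ∈ (H.tree k).verts ∧
    v ≠ (H.tree k).root ∧ w ≠ (H.tree k).root ∧ v ≠ w ∧
    (H.tree k).parent v = (H.tree k).parent w

/-- `S` respects the pseudoedge `{t_i, t_j}`: all non-root variables of `C_{i,j}` occur
negatively in `S` and the siblings of all internal variables of `C_{i,j}` occur
positively in `S`. -/
def Respects (H : BTB V) (i j : Fin H.m) (S : Finset (V × Bool)) : Prop :=
  ∃ ℓ, H.IsCommonLeaf i j ℓ ∧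
    (∀ v ∈ H.clauseVerts i j ℓ,
      v ≠ (H.tree i).root → v ≠ (H.tree j).root → (v, false) ∈ S) ∧
    (∀ v ∈ H.clauseVerts i j ℓ,
      v ≠ (H.tree i).root → v ≠ (H.tree j).root → v ≠ ℓ →
      ∀ w, H.Sibling v w → (w, true) ∈ S)

/-- `S` is `η`-comfortable w.r.t. the pseudomatching `M`: `S` falsifies no clause of
`φ_H` and respects at least `η·|M|` pseudoedges of `M`. -/
noncomputable def Comfortable (H : BTB V) (M : Finset (Fin H.m × Fin H.m)) (η : ℝ)
    (S : Finset (V × Bool)) : Prop :=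
  H.FalsifiesNoClause S ∧
    η * M.card ≤ ((M.filter (fun e => H.Respects e.1 e.2 S)).card : ℝ)

/-- `S` is a guarded set of literals. -/
def Guarded (H : BTB V) (S : Finset (V × Bool)) : Prop :=
  Consistent S ∧ ∀ i j ℓ, H.IsCommonLeaf i j ℓ →
    ((ℓ, true) ∉ S ∧ (ℓ, false) ∉ S) ∨
    (∃ v ∈ H.clauseVerts i j ℓ, v ≠ ℓ ∧ (v, true) ∈ S) ∨
    ((ℓ, true) ∈ S ∧ ∀ v ∈ H.clauseVerts i j ℓ, v ≠ ℓ → (v, false) ∈ S)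

/-! #### Matching CNFs and matching OR-CNFs -/

/-- The 'half clause' `C^{1/2}_{i,j}`: the positive clause on the vertices of the path
from `t_i` (if `side = true`) or from `t_j` (if `side = false`) to the common leaf `ℓ`. -/
def halfClause (H : BTB V) (i j : Fin H.m) (ℓ : V) (side : Bool) : Finset (V × Bool) :=
  (if side then (H.tree i).pathVerts ℓ else (H.tree j).pathVerts ℓ).image (fun v => (v, true))

/-- The matching CNF w.r.t. `M` determined by the side choice `c`: one half clause per
pseudoedge of `M`.  The formulas of `CNF(M)` are exactly the CNFs `matchingCNF H M c`. -/
def matchingCNF (H : BTB V) (M : Finset (Fin H.m × Fin H.m))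
    (c : Fin H.m × Fin H.m → Bool) : Set (Finset (V × Bool)) :=
  {C | ∃ e ∈ M, ∃ ℓ, H.IsCommonLeaf e.1 e.2 ℓ ∧ C = H.halfClause e.1 e.2 ℓ (c e)}

/-- A matching OR-CNF w.r.t. `M` is determined by a map `Ψ` assigning to each assignment
`S₀` of the variables `V(H) \ ⋃M` a matching CNF (given by its side choice `Ψ S₀`);
the formula is `⋁_{S₀} (Conj(S₀) ∧ matchingCNF H M (Ψ S₀))`.  `S` satisfies it iff for
(the) `S₀ ⊆ S`, `S` satisfies the corresponding matching CNF. -/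
def SatORCNF (H : BTB V) (M : Finset (Fin H.m × Fin H.m))
    (Ψ : Finset (V × Bool) → (Fin H.m × Fin H.m) → Bool) (S : Finset (V × Bool)) : Prop :=
  ∃ S₀, AssignsExactly (Finset.univ \ H.matchingRoots M) S₀ ∧ S₀ ⊆ S ∧
    SatCNF (H.matchingCNF M (Ψ S₀)) S

/-- `X` is an `(a, b)`-determining set for the NBP `Z` computing `φ_H`. -/
def IsDeterminingSet (H : BTB V) (Z : NBP V) (a b : ℝ) (X : Finset (Fin Z.n)) : Prop :=
  (X.card : ℝ) ≤ a ∧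
  ∃ M : Finset (Fin H.m × Fin H.m), H.IsPseudomatching M ∧ b ≤ (M.card : ℝ) ∧
    ∃ Ψ : Finset (V × Bool) → (Fin H.m × Fin H.m) → Bool,
      ∀ p, Z.IsCompPath p → X ⊆ pathVertices p → H.SatORCNF M Ψ (pathLits p)

end BTB


/-! ### Auxiliary development for statement 6 -/

section Aux6

variable {V : Type} [DecidableEq V] [Fintype V]

open Finset

lemma iter_parent_spec (T : RootedTree V) {ℓ : V} (hℓ : ℓ ∈ T.verts) :
    ∀ k, k ≤ T.depth ℓ →
      T.parent^[k] ℓ ∈ T.verts ∧ T.depth (T.parent^[k] ℓ) = T.depth ℓ - k := by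
  intro k
  induction k with
  | zero => intro _; exact ⟨by simpa using hℓ, by simp⟩
  | succ k ih =>
    intro hk
    obtain ⟨hmem, hdep⟩ := ih (Nat.le_of_succ_le hk)
    have hpos : 0 < T.depth (T.parent^[k] ℓ) := by omega
    have hne : T.parent^[k] ℓ ≠ T.root := by
      intro h; rw [h, T.depth_root] at hpos; omega
    have hp := T.parent_mem _ hmem hne
    have hd := T.depth_parent _ hmem hne
    rw [Function.iterate_succ_apply']
    exact ⟨hp, by omega⟩

lemma mem_pathVerts_iff (T : RootedTree V) {ℓ v : V} :
    v ∈ T.pathVerts ℓ ↔ ∃ k ≤ T.depth ℓ, v = T.parent^[k] ℓ := by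
  simp [RootedTree.pathVerts, Nat.lt_succ_iff, eq_comm]

lemma self_mem_pathVerts (T : RootedTree V) (ℓ : V) : ℓ ∈ T.pathVerts ℓ :=
  (mem_pathVerts_iff T).mpr ⟨0, Nat.zero_le _, rfl⟩

lemma leaf_mem_verts (T : RootedTree V) {ℓ : V} (h : ℓ ∈ T.leaves) : ℓ ∈ T.verts :=
  (Finset.mem_filter.mp h).1

/-- A proper ancestor of a leaf is in the tree but is not a leaf of the tree. -/
lemma ancestor_not_leaf (T : RootedTree V) {ℓ v : V} (hℓ : ℓ ∈ T.leaves)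
    (hv : v ∈ T.pathVerts ℓ) (hne : v ≠ ℓ) : v ∈ T.verts ∧ v ∉ T.leaves := by
  obtain ⟨k, hk, rfl⟩ := (mem_pathVerts_iff T).mp hv
  have hℓv := leaf_mem_verts T hℓ
  obtain ⟨hmem, hdep⟩ := iter_parent_spec T hℓv k hk
  refine ⟨hmem, ?_⟩
  have hk0 : k ≠ 0 := by rintro rfl; exact hne rfl
  obtain ⟨k', rfl⟩ : ∃ k', k = k' + 1 := ⟨k - 1, by omega⟩
  obtain ⟨hmem', hdep'⟩ := iter_parent_spec T hℓv k' (by omega)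
  have hpos' : 0 < T.depth (T.parent^[k'] ℓ) := by omega
  have hne' : T.parent^[k'] ℓ ≠ T.root := by
    intro h; rw [h, T.depth_root] at hpos'; omega
  have hchild : T.parent^[k'] ℓ ∈ T.children (T.parent^[k' + 1] ℓ) := by
    rw [RootedTree.children, Finset.mem_filter]
    exact ⟨hmem', hne', (Function.iterate_succ_apply' T.parent k' ℓ).symm⟩
  intro hleaf
  have := (Finset.mem_filter.mp hleaf).2
  rw [this] at hchild
  simp at hchild

/-- Lemma A: a non-leaf vertex of a clause of `φ_H` is not a common leaf of any pair. -/
lemma not_commonLeaf_of_mem_clause (H : BTB V) {i j : Fin H.m} {ℓ v : V}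
    (hij : H.IsCommonLeaf i j ℓ) (hv : v ∈ H.clauseVerts i j ℓ) (hne : v ≠ ℓ) :
    ∀ a b, ¬ H.IsCommonLeaf a b v := by
  obtain ⟨hijne, hli, hlj⟩ := hij
  have key : ∃ k₀ : Fin H.m, v ∈ (H.tree k₀).verts ∧ v ∉ (H.tree k₀).leaves := by
    rcases Finset.mem_union.mp hv with h | h
    · exact ⟨i, ancestor_not_leaf _ hli h hne⟩
    · exact ⟨j, ancestor_not_leaf _ hlj h hne⟩
  obtain ⟨k₀, hvmem, hvnl⟩ := key
  rintro a b ⟨hab, hla, hlb⟩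
  by_cases hak : a = k₀
  · exact hvnl (hak ▸ hla)
  · exact hvnl ((H.common_leaf a k₀ hak v (leaf_mem_verts _ hla) hvmem).2)

/-- The condition under which the "closure" map sets a leaf to true. -/
def Cond (H : BTB V) (g : V → Bool) (ℓ : V) : Prop :=
  ∃ i j, H.IsCommonLeaf i j ℓ ∧ ∀ v ∈ H.clauseVerts i j ℓ, v ≠ ℓ → g v = false

/-- The closure map on Boolean assignments. -/
noncomputable def Fb (H : BTB V) (g : V → Bool) : V → Bool :=
  fun v => if Cond H g v then true else g v

/-- Functional version of satisfaction of `φ_H`. -/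
def SatG (H : BTB V) (g : V → Bool) : Prop :=
  ∀ i j ℓ, H.IsCommonLeaf i j ℓ → ∃ v ∈ H.clauseVerts i j ℓ, g v = true

/-- Functional version of `Fix`. -/
noncomputable def FixG (H : BTB V) (g : V → Bool) : Finset V :=
  Finset.univ.filter (fun ℓ => Cond H g ℓ ∧ g ℓ = true)

lemma mem_FixG {H : BTB V} {g : V → Bool} {ℓ : V} :
    ℓ ∈ FixG H g ↔ Cond H g ℓ ∧ g ℓ = true := by
  simp [FixG]

lemma satG_Fb (H : BTB V) (g₀ : V → Bool) : SatG H (Fb H g₀) := by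
  intro i j ℓ hcl
  by_cases hc : Cond H g₀ ℓ
  · refine ⟨ℓ, Finset.mem_union_left _ (self_mem_pathVerts _ ℓ), ?_⟩
    simp [Fb, if_pos hc]
  · have : ¬ ∀ v ∈ H.clauseVerts i j ℓ, v ≠ ℓ → g₀ v = false := by
      intro h; exact hc ⟨i, j, hcl, h⟩
    push_neg at this
    obtain ⟨v, hvC, hvne, hvt⟩ := this
    refine ⟨v, hvC, ?_⟩
    simp only [Fb]
    split
    · rfl
    · simpa using hvt

/-- Fiber characterization: `Fb g₀ = g` iff `g₀` agrees with `g` off `FixG g`. -/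
lemma Fb_eq_iff (H : BTB V) {g g₀ : V → Bool} (hg : SatG H g) :
    Fb H g₀ = g ↔ ∀ v, v ∉ FixG H g → g₀ v = g v := by
  constructor
  · intro h v hv
    by_cases hc : Cond H g₀ v
    · exfalso
      have hgv : g v = true := by
        rw [← h]; rw [Fb]; rw [if_pos hc]
      obtain ⟨a, b, hab, hall⟩ := hc
      apply hv
      rw [mem_FixG]
      refine ⟨⟨a, b, hab, ?_⟩, hgv⟩
      intro w hw hwne
      have hnc : ¬ Cond H g₀ w := by
        rintro ⟨a', b', hab', -⟩
        exact not_commonLeaf_of_mem_clause H hab hw hwne a' b' hab'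
      have : g w = Fb H g₀ w := by rw [h]
      rw [this, Fb, if_neg hnc]
      exact hall w hw hwne
    · have : g v = g₀ v := by rw [← h]; simp [Fb, if_neg hc]
      exact this.symm
  · intro hagree
    funext v
    by_cases hv : v ∈ FixG H g
    · obtain ⟨⟨a, b, hab, hall⟩, hgv⟩ := mem_FixG.mp hv
      have hc : Cond H g₀ v := by
        refine ⟨a, b, hab, fun w hw hwne => ?_⟩
        have hwfix : w ∉ FixG H g := by
          rw [mem_FixG]; rintro ⟨-, hwt⟩
          rw [hall w hw hwne] at hwt; exact Bool.false_ne_true hwt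
        rw [hagree w hwfix]
        exact hall w hw hwne
      rw [Fb, if_pos hc, hgv]
    · by_cases hc : Cond H g₀ v
      · exfalso
        obtain ⟨a, b, hab, hall⟩ := hc
        have hfalse : ∀ w ∈ H.clauseVerts a b v, w ≠ v → g w = false := by
          intro w hw hwne
          have hwfix : w ∉ FixG H g := by
            rw [mem_FixG]
            rintro ⟨⟨a', b', hab', -⟩, -⟩
            exact not_commonLeaf_of_mem_clause H hab hw hwne a' b' hab'
          rw [← hagree w hwfix]
          exact hall w hw hwne
        obtain ⟨u, huC, hut⟩ := hg a b v hab
        have huv : u = v := by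
          by_contra hne
          rw [hfalse u huC hne] at hut
          exact Bool.false_ne_true hut
        apply hv
        rw [mem_FixG]
        exact ⟨⟨a, b, hab, hfalse⟩, huv ▸ hut⟩
      · rw [Fb, if_neg hc]
        exact hagree v hv

end Aux6

section Aux6b

variable {V : Type} [DecidableEq V] [Fintype V]

open Finset

/-- The total assignment (as a set of literals) associated to a Boolean function. -/
def toS (g : V → Bool) : Finset (V × Bool) :=
  Finset.univ.image (fun v => (v, g v))

lemma mem_toS {g : V → Bool} {x : V} {b : Bool} : (x, b) ∈ toS g ↔ g x = b := by
  simp [toS, Prod.ext_iff]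

lemma assigns_toS (g : V → Bool) : AssignsExactly Finset.univ (toS g) := by
  refine ⟨fun l _ => Finset.mem_univ _, fun x _ => ⟨g x, mem_toS.mpr rfl, fun b hb => (mem_toS.mp hb).symm⟩⟩

lemma toS_inj {g g' : V → Bool} (h : toS g = toS g') : g = g' := by
  funext v
  have : (v, g v) ∈ toS g' := by rw [← h]; exact mem_toS.mpr rfl
  exact (mem_toS.mp this).symm

noncomputable def ofS (S : Finset (V × Bool)) : V → Bool :=
  fun v => decide ((v, true) ∈ S)

lemma toS_ofS {S : Finset (V × Bool)} (h : AssignsExactly Finset.univ S) :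
    toS (ofS S) = S := by
  ext ⟨x, b⟩
  rw [mem_toS]
  obtain ⟨b₀, hb₀, huniq⟩ := h.2 x (Finset.mem_univ x)
  cases b with
  | true => simp [ofS]
  | false =>
    simp only [ofS, decide_eq_false_iff_not]
    constructor
    · intro hnt
      have : b₀ = false := by
        cases b₀ with
        | true => exact absurd hb₀ hnt
        | false => rfl
      exact this ▸ hb₀
    · intro hf ht
      have h1 := huniq true ht
      have h2 := huniq false hf
      rw [← h2] at h1; exact Bool.false_ne_true h1.symm

lemma satphi_toS_iff (H : BTB V) (g : V → Bool) :
    H.SatisfiesPhi (toS g) ↔ SatG H g := by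
  simp only [BTB.SatisfiesPhi, SatG, mem_toS]

lemma fix_toS (H : BTB V) (g : V → Bool) : H.Fix (toS g) = ↑(FixG H g) := by
  ext ℓ
  simp only [BTB.Fix, Finset.mem_coe, mem_FixG, Set.mem_setOf_eq, Finset.coe_filter, Cond, mem_toS,
    Finset.mem_univ, true_and]
  constructor
  · rintro ⟨i, j, h1, h2, h3⟩; exact ⟨⟨i, j, h1, h3⟩, h2⟩
  · rintro ⟨⟨i, j, h1, h3⟩, h2⟩; exact ⟨i, j, h1, h2, h3⟩

lemma mem_SATH_toS (H : BTB V) {g : V → Bool} (hg : SatG H g) : toS g ∈ H.SATH := by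
  rw [BTB.SATH, Finset.mem_filter]
  exact ⟨Finset.mem_univ _, assigns_toS g, (satphi_toS_iff H g).mpr hg⟩

/-- Fiber count: the fiber of `Fb` over a satisfying `g` has size `2 ^ |FixG g|`. -/
lemma fiber_card (H : BTB V) {g : V → Bool} (hg : SatG H g) :
    (Finset.univ.filter (fun g₀ : V → Bool => Fb H g₀ = g)).card = 2 ^ (FixG H g).card := by
  set A := FixG H g with hA
  have hset : (Finset.univ.filter (fun g₀ : V → Bool => Fb H g₀ = g)) =
      (Finset.univ.filter (fun g₀ : V → Bool => ∀ v, v ∉ A → g₀ v = g v)) := by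
    ext g₀
    simp only [Finset.mem_filter, Finset.mem_univ, true_and]
    exact Fb_eq_iff H hg
  rw [hset, ← Finset.card_powerset A]
  apply Finset.card_bij' (fun g₀ _ => A.filter (fun v => g₀ v = true))
    (fun T _ => fun v => if v ∈ A then decide (v ∈ T) else g v)
  · intro g₀ _
    exact Finset.mem_powerset.mpr (Finset.filter_subset _ _)
  · intro T _
    simp only [Finset.mem_filter, Finset.mem_univ, true_and]
    intro v hv
    rw [if_neg hv]
  · intro g₀ hg₀
    simp only [Finset.mem_filter, Finset.mem_univ, true_and] at hg₀
    funext v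
    by_cases hv : v ∈ A
    · rw [if_pos hv]
      simp [Finset.mem_filter, hv]
    · rw [if_neg hv]
      exact (hg₀ v hv).symm
  · intro T hT
    have hTA : T ⊆ A := Finset.mem_powerset.mp hT
    ext v
    simp only [Finset.mem_filter]
    constructor
    · rintro ⟨hvA, hv⟩
      rw [if_pos hvA] at hv
      exact of_decide_eq_true hv
    · intro hv
      have hvA : v ∈ A := hTA hv
      exact ⟨hvA, by rw [if_pos hvA]; exact decide_eq_true hv⟩

lemma sum_pow_fix (H : BTB V) :
    ∑ g ∈ Finset.univ.filter (SatG H), 2 ^ (FixG H g).card = 2 ^ Fintype.card V := by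
  have hmap : ∀ g₀ ∈ (Finset.univ : Finset (V → Bool)),
      Fb H g₀ ∈ Finset.univ.filter (SatG H) := by
    intro g₀ _
    exact Finset.mem_filter.mpr ⟨Finset.mem_univ _, satG_Fb H g₀⟩
  have hcount := Finset.card_eq_sum_card_fiberwise hmap
  rw [Finset.card_univ, Fintype.card_fun, Fintype.card_bool] at hcount
  rw [hcount]
  exact Finset.sum_congr rfl fun g hg => (fiber_card H (Finset.mem_filter.mp hg).2).symm

end Aux6b

/-- the weights `(1/2)^{|V(H) \ Fix(S)|}` of the satisfying assignments of
`φ_H` sum up to `1`, i.e. they define a probability distribution on `SAT(H)`. -/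
theorem statement_6 (V : Type) [DecidableEq V] [Fintype V] (H : BTB V)
    (hH : H.IsPseudoexpander) :
    ∑ S ∈ H.SATH, H.weight S = 1 := by
  classical
  have key := sum_pow_fix H
  have hsum : ∑ S ∈ H.SATH, H.weight S
      = ∑ g ∈ Finset.univ.filter (SatG H),
          ((1 : ℝ) / 2) ^ (Fintype.card V - (FixG H g).card) := by
    refine (Finset.sum_bij (fun g _ => toS g) ?_ ?_ ?_ ?_).symm
    · intro g hg
      exact mem_SATH_toS H (Finset.mem_filter.mp hg).2
    · intro g₁ _ g₂ _ h
      exact toS_inj h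
    · intro S hS
      rw [BTB.SATH, Finset.mem_filter] at hS
      obtain ⟨-, hassign, hsat⟩ := hS
      refine ⟨ofS S, ?_, toS_ofS hassign⟩
      rw [Finset.mem_filter]
      refine ⟨Finset.mem_univ _, ?_⟩
      rw [← satphi_toS_iff H, toS_ofS hassign]
      exact hsat
    · intro g _
      rw [BTB.weight, fix_toS, Set.ncard_coe_finset]
  rw [hsum]
  have hterm : ∀ g ∈ Finset.univ.filter (SatG H),
      ((1 : ℝ) / 2) ^ (Fintype.card V - (FixG H g).card)
        = ((1 : ℝ) / 2) ^ (Fintype.card V) * (2 : ℝ) ^ ((FixG H g).card) := by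
    intro g _
    have hk : (FixG H g).card ≤ Fintype.card V := Finset.card_le_univ _
    have h2 : ((1 : ℝ) / 2) ^ (Fintype.card V)
        = ((1 : ℝ) / 2) ^ (Fintype.card V - (FixG H g).card)
          * ((1 : ℝ) / 2) ^ ((FixG H g).card) := by
      rw [← pow_add]; congr 1; omega
    rw [h2, mul_assoc, ← mul_pow]
    norm_num
  rw [Finset.sum_congr rfl hterm, ← Finset.mul_sum]
  have hsum2 : ∑ g ∈ Finset.univ.filter (SatG H), (2 : ℝ) ^ ((FixG H g).card)
      = (2 : ℝ) ^ (Fintype.card V) := by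
    exact_mod_cast key
  rw [hsum2, ← mul_pow]
  norm_num

end NBPPaper
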